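/- Let T0 and T1 be two balanced trees with T0 ≼ T1 in the Tamari order. Then any two sequences of right rotations transforming T0 into T1 (i.e., any two chains T0 = U_0 ⋌ U_1 ⋌ … ⋌ U_m = T1) have the same length m; moreover the set of infix positions of the rotation roots used is the same for both sequences, each position occurring exactly once. -/

import Mathlib

/-- Complete rooted planar binary trees. -/
inductive BTree where
  | leaf : BTree
  | node : BTree → BTree → BTree
  deriving DecidableEq

namespace BTree

/-- The height of a tree. -/
def ht : BTree → ℕ
  | leaf => 0
  | node l r => 1 + max l.ht r.ht

/-- The imbalance value of the root of a tree (`γ`). -/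
def imb : BTree → ℤ
  | leaf => 0
  | node l r => (r.ht : ℤ) - l.ht

/-- A tree is balanced if every node has imbalance value in {-1, 0, 1}. -/
def Balanced : BTree → Prop
  | leaf => True
  | node l r =>
      ((r.ht : ℤ) - l.ht = -1 ∨ (r.ht : ℤ) - l.ht = 0 ∨ (r.ht : ℤ) - l.ht = 1) ∧
      Balanced l ∧ Balanced r

/-- The subtree at a position (`false` = go left, `true` = go right). -/
def subtreeAt : BTree → List Bool → Option BTree
  | t, [] => some t
  | leaf, _ :: _ => none
  | node l _, false :: p => subtreeAt l p
  | node _ r, true :: p => subtreeAt r p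

/-- `p` is the position of an internal node of `t`. -/
def IsNodePos (t : BTree) (p : List Bool) : Prop :=
  ∃ l r, subtreeAt t p = some (node l r)

/-- Right rotation whose root `y` is at position `p`: the subtree
`(A ∧ B) ∧ C` at `p` is replaced by `A ∧ (B ∧ C)`. -/
inductive RotAt : BTree → List Bool → BTree → Prop
  | here (a b c : BTree) : RotAt (node (node a b) c) [] (node a (node b c))
  | left {l l' : BTree} (r : BTree) {p : List Bool} :
      RotAt l p l' → RotAt (node l r) (false :: p) (node l' r)
  | right (l : BTree) {r r' : BTree} {p : List Bool} :
      RotAt r p r' → RotAt (node l r) (true :: p) (node l r')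

/-- `t₁` is obtained from `t₀` by a single right rotation (`t₀ ⋌ t₁`). -/
def Rot (t₀ t₁ : BTree) : Prop := ∃ p, RotAt t₀ p t₁

/-- The Tamari order: reflexive transitive closure of right rotation. -/
def Tamari : BTree → BTree → Prop := Relation.ReflTransGen Rot

/-- Number of internal nodes. -/
def size : BTree → ℕ
  | leaf => 0
  | node l r => l.size + r.size + 1

/-- The infix position (rank in the infix traversal, starting from 0) of the
node at position `p` in `t`. -/
def infixRank : BTree → List Bool → ℕ
  | node l _, [] => l.size
  | node l _, false :: p => infixRank l p
  | node l r, true :: p => l.size + 1 + infixRank r p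
  | leaf, _ => 0

/-! ### Basic lemmas -/

lemma balanced_node_iff {l r : BTree} :
    Balanced (node l r) ↔ Balanced l ∧ Balanced r ∧ ht l ≤ ht r + 1 ∧ ht r ≤ ht l + 1 := by
  show (((r.ht : ℤ) - l.ht = -1 ∨ _ ∨ _) ∧ _ ∧ _) ↔ _
  constructor
  · rintro ⟨h1, h2, h3⟩; exact ⟨h2, h3, by omega, by omega⟩
  · rintro ⟨h1, h2, h3, h4⟩; exact ⟨by omega, h1, h2⟩

lemma rot_size {t u : BTree} {p : List Bool} (h : RotAt t p u) : size u = size t := by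
  induction h with
  | here a b c => simp [size]; omega
  | left r _ ih => simp [size, ih]
  | right l _ ih => simp [size, ih]

lemma rank_lt_size {t u : BTree} {p : List Bool} (h : RotAt t p u) :
    infixRank t p < size t := by
  induction h with
  | here a b c => simp [infixRank, size]
  | left r _ ih => simp [infixRank, size]; omega
  | right l _ ih => simp [infixRank, size]; omega

/-! ### Height certificates -/

/-- A certificate that the height of a tree is at least `h`, stable under right
rotations. -/
inductive Cert : ℕ → BTree → Prop
  | zero (t : BTree) : Cert 0 t
  | ofRight {h : ℕ} (l : BTree) {r : BTree} : Cert h r → Cert (h + 1) (node l r)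
  | ofBoth {h : ℕ} {l r : BTree} : Cert (h + 1) l → Cert h r → Cert (h + 2) (node l r)
  | ofLeft {h : ℕ} {l : BTree} (r : BTree) : Cert h l → Cert h (node l r)

lemma cert_le_ht {h : ℕ} {t : BTree} (hc : Cert h t) : h ≤ ht t := by
  induction hc with
  | zero => omega
  | ofRight l _ ih => simp [ht]; omega
  | ofBoth _ _ ihl ihr => simp [ht]; omega
  | ofLeft r _ ih => simp [ht]; omega

lemma cert_mono {h : ℕ} {t : BTree} (hc : Cert h t) : ∀ k ≤ h, Cert k t := by
  induction hc with
  | zero => intro k hk; interval_cases k; exact Cert.zero _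
  | @ofRight h l r _ ih =>
      intro k hk
      match k, hk with
      | 0, _ => exact Cert.zero _
      | (k' + 1), hk => exact Cert.ofRight l (ih k' (by omega))
  | @ofBoth h l r _ _ ihl ihr =>
      intro k hk
      match k, hk with
      | 0, _ => exact Cert.zero _
      | (k' + 1), hk =>
        rcases Nat.lt_or_ge (k' + 1) (h + 2) with hlt | hge
        · exact Cert.ofLeft r (ihl (k' + 1) (by omega))
        · have hk' : k' = h + 1 := by omega
          subst hk'
          exact Cert.ofBoth (ihl _ le_rfl) (ihr _ le_rfl)
  | ofLeft r _ ih => intro k hk; exact Cert.ofLeft r (ih k hk)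

lemma cert_rot_here {h : ℕ} {t : BTree} (hc : Cert h t) :
    ∀ A B C : BTree, t = node (node A B) C → Cert h (node A (node B C)) := by
  induction hc with
  | zero => intro A B C _; exact Cert.zero _
  | @ofRight h' l r hr _ =>
      intro A B C heq
      injection heq with h1 h2; subst h1; subst h2
      exact Cert.ofRight A (cert_mono (Cert.ofRight B hr) _ (by omega))
  | @ofBoth h' l r hl hr _ _ =>
      intro A B C heq
      injection heq with h1 h2; subst h1; subst h2
      exact Cert.ofRight A (Cert.ofRight B hr)
  | @ofLeft h' l r hl _ =>
      intro A B C heq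
      injection heq with h1 h2; subst h1; subst h2
      cases hl with
      | zero => exact Cert.zero _
      | ofRight _ hB => exact Cert.ofRight A (Cert.ofLeft r hB)
      | ofBoth hA hB => exact Cert.ofBoth hA (Cert.ofLeft r hB)
      | ofLeft _ hA => exact Cert.ofLeft _ hA

lemma cert_rot {t u : BTree} {p : List Bool} (hrot : RotAt t p u) :
    ∀ h, Cert h t → Cert h u := by
  induction hrot with
  | here a b c => intro h hc; exact cert_rot_here hc a b c rfl
  | @left l l' r p _ ih =>
      intro h hc
      cases hc with
      | zero => exact Cert.zero _
      | ofRight _ hr => exact Cert.ofRight _ hr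
      | ofBoth hl hr => exact Cert.ofBoth (ih _ hl) hr
      | ofLeft _ hl => exact Cert.ofLeft _ (ih _ hl)
  | @right l r r' p _ ih =>
      intro h hc
      cases hc with
      | zero => exact Cert.zero _
      | ofRight _ hr => exact Cert.ofRight _ (ih _ hr)
      | ofBoth hl hr => exact Cert.ofBoth hl (ih _ hr)
      | ofLeft _ hl => exact Cert.ofLeft _ hl

lemma cert_of_balanced {t : BTree} (hb : Balanced t) : Cert (ht t) t := by
  induction t with
  | leaf => exact Cert.zero _
  | node l r ihl ihr =>
      rw [balanced_node_iff] at hb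
      obtain ⟨hl, hr, h1, h2⟩ := hb
      rcases le_or_gt (ht l) (ht r) with hle | hlt
      · have : ht (node l r) = ht r + 1 := by simp [ht]; omega
        rw [this]
        exact Cert.ofRight l (ihr hr)
      · have h3 : ht (node l r) = ht l + 1 := by simp [ht]; omega
        have h4 : ht l = (ht l - 1) + 1 := by omega
        rw [h3]
        have hcl : Cert ((ht l - 1) + 1) l := by rw [← h4]; exact ihl hl
        have hcr : Cert (ht l - 1) r := cert_mono (ihr hr) _ (by omega)
        have := Cert.ofBoth hcl hcr
        rwa [show ht l - 1 + 2 = ht l + 1 by omega] at this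

/-! ### Rotations between balanced trees preserve heights -/

lemma ht_rot_of_balanced {t u : BTree} {p : List Bool} (hrot : RotAt t p u)
    (hbt : Balanced t) (hbu : Balanced u) : ht u = ht t := by
  induction hrot with
  | here a b c =>
      rw [balanced_node_iff] at hbt hbu
      obtain ⟨hab, hc, ht1, ht2⟩ := hbt
      obtain ⟨ha', hbc', hu1, hu2⟩ := hbu
      rw [balanced_node_iff] at hab
      simp only [ht] at *
      omega
  | @left l l' r p h ih =>
      rw [balanced_node_iff] at hbt hbu
      obtain ⟨h1, h2, _, _⟩ := hbt
      obtain ⟨h1', _, _, _⟩ := hbu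
      simp only [ht]
      rw [ih h1 h1']
  | @right l r r' p h ih =>
      rw [balanced_node_iff] at hbt hbu
      obtain ⟨_, h2, _, _⟩ := hbt
      obtain ⟨_, h2', _, _⟩ := hbu
      simp only [ht]
      rw [ih h2 h2']

/-! ### Strong witnesses: a node with balanced left subtree whose right subtree
is certified at least two higher. Such a witness persists under right
rotations and certifies non-balancedness. -/

/-- A tree contains a *strong witness*: a node whose left subtree `P` is
balanced and whose right subtree is certified of height at least `ht P + 2`. -/
def StrongB : BTree → Prop
  | leaf => False
  | node l r => (Balanced l ∧ Cert (ht l + 2) r) ∨ StrongB l ∨ StrongB r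

lemma strongB_not_balanced {t : BTree} (hs : StrongB t) : ¬ Balanced t := by
  induction t with
  | leaf => exact absurd hs (by simp [StrongB])
  | node l r ihl ihr =>
      intro hb
      rw [balanced_node_iff] at hb
      obtain ⟨hl, hr, h1, h2⟩ := hb
      rcases hs with ⟨_, hc⟩ | hs | hs
      · have := cert_le_ht hc; omega
      · exact ihl hs hl
      · exact ihr hs hr

/-- First unbalancing step from a balanced tree creates a strong witness. -/
lemma strongB_of_unbal_step {t u : BTree} {p : List Bool} (hrot : RotAt t p u)
    (hbt : Balanced t) (hbu : ¬ Balanced u) : StrongB u := by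
  induction hrot with
  | here a b c =>
      rw [balanced_node_iff] at hbt
      obtain ⟨hab, hc, ht1, ht2⟩ := hbt
      rw [balanced_node_iff] at hab
      obtain ⟨ha, hb, hab1, hab2⟩ := hab
      -- heights
      have hcge : ht a ≤ ht c ∧ ht b ≤ ht c := by simp [ht] at ht1 ht2 ⊢; omega
      by_cases h1 : ht c ≥ ht a + 1
      · -- witness at the root
        left
        refine ⟨ha, ?_⟩
        have : Cert (ht a + 1) c := cert_mono (cert_of_balanced hc) _ (by omega)
        exact Cert.ofRight b this
      · -- then necessarily ht c ≥ ht b + 2, witness at the right child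
        have h2 : ht c ≥ ht b + 2 := by
          by_contra h3
          apply hbu
          rw [balanced_node_iff]
          refine ⟨ha, ?_, ?_, ?_⟩
          · rw [balanced_node_iff]; exact ⟨hb, hc, by omega, by omega⟩
          · simp [ht]; omega
          · simp [ht]; omega
        right; right
        left
        exact ⟨hb, cert_mono (cert_of_balanced hc) _ (by omega)⟩
  | @left l l' r p h ih =>
      rw [balanced_node_iff] at hbt
      obtain ⟨hl, hr, h1, h2⟩ := hbt
      by_cases hbl' : Balanced l'
      · exfalso
        apply hbu
        rw [balanced_node_iff]
        have := ht_rot_of_balanced h hl hbl'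
        exact ⟨hbl', hr, by omega, by omega⟩
      · right; left; exact ih hl hbl'
  | @right l r r' p h ih =>
      rw [balanced_node_iff] at hbt
      obtain ⟨hl, hr, h1, h2⟩ := hbt
      by_cases hbr' : Balanced r'
      · exfalso
        apply hbu
        rw [balanced_node_iff]
        have := ht_rot_of_balanced h hr hbr'
        exact ⟨hl, hbr', by omega, by omega⟩
      · right; right; exact ih hr hbr'

/-- Strong witnesses are preserved by right rotations. -/
lemma strongB_rot {t u : BTree} {p : List Bool} (hrot : RotAt t p u)
    (hs : StrongB t) : StrongB u := by
  induction hrot with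
  | here a b c =>
      show (Balanced a ∧ Cert (ht a + 2) (node b c)) ∨ StrongB a ∨
        ((Balanced b ∧ Cert (ht b + 2) c) ∨ StrongB b ∨ StrongB c)
      rcases hs with ⟨hab, hc⟩ | hs | hs
      · -- witness was the rotation root: move it to the new right child
        rw [balanced_node_iff] at hab
        refine Or.inr (Or.inr (Or.inl ⟨hab.2.1, cert_mono hc _ ?_⟩))
        simp [ht]; omega
      · -- witness inside (node a b)
        rcases hs with ⟨ha, hb⟩ | hs | hs
        · -- witness was the node (node a b) itself: new root works via ofLeft
          exact Or.inl ⟨ha, Cert.ofLeft c hb⟩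
        · exact Or.inr (Or.inl hs)
        · exact Or.inr (Or.inr (Or.inr (Or.inl hs)))
      · exact Or.inr (Or.inr (Or.inr (Or.inr hs)))
  | @left l l' r p h ih =>
      rcases hs with ⟨hl, hc⟩ | hs | hs
      · by_cases hbl' : Balanced l'
        · left
          refine ⟨hbl', ?_⟩
          rwa [ht_rot_of_balanced h hl hbl']
        · right; left; exact strongB_of_unbal_step h hl hbl'
      · right; left; exact ih hs
      · right; right; exact hs
  | @right l r r' p h ih =>
      rcases hs with ⟨hl, hc⟩ | hs | hs
      · left; exact ⟨hl, cert_rot h _ hc⟩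
      · right; left; exact hs
      · right; right; exact ih hs

/-! ### Rank-indexed data: left-subtree size and imbalance of the node at a
given infix rank -/

/-- Size of the left subtree of the node at infix rank `k` (0 out of range). -/
def lsz : BTree → ℕ → ℕ
  | leaf, _ => 0
  | node l r, k =>
      if k < l.size then lsz l k
      else if k = l.size then l.size
      else lsz r (k - l.size - 1)

/-- Imbalance of the node at infix rank `k` (0 out of range). -/
def gk : BTree → ℕ → ℤ
  | leaf, _ => 0
  | node l r, k =>
      if k < l.size then gk l k
      else if k = l.size then (r.ht : ℤ) - l.ht
      else gk r (k - l.size - 1)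

lemma lsz_node_lt {l r : BTree} {k : ℕ} (h : k < l.size) :
    lsz (node l r) k = lsz l k := by simp [lsz, h]

lemma lsz_node_eq {l r : BTree} : lsz (node l r) l.size = l.size := by
  simp [lsz]

lemma lsz_node_gt {l r : BTree} {k : ℕ} (h : l.size < k) :
    lsz (node l r) k = lsz r (k - l.size - 1) := by
  have h1 : ¬ k < l.size := by omega
  have h2 : ¬ k = l.size := by omega
  simp [lsz, h1, h2]

lemma gk_node_lt {l r : BTree} {k : ℕ} (h : k < l.size) :
    gk (node l r) k = gk l k := by simp [gk, h]

lemma gk_node_eq {l r : BTree} : gk (node l r) l.size = (r.ht : ℤ) - l.ht := by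
  simp [gk]

lemma gk_node_gt {l r : BTree} {k : ℕ} (h : l.size < k) :
    gk (node l r) k = gk r (k - l.size - 1) := by
  have h1 : ¬ k < l.size := by omega
  have h2 : ¬ k = l.size := by omega
  simp [gk, h1, h2]

/-- Effect of a rotation on the `lsz` vector: it strictly decreases at the
infix rank of the rotation root and is unchanged elsewhere. -/
lemma lsz_rot {t u : BTree} {p : List Bool} (hrot : RotAt t p u) :
    lsz u (infixRank t p) < lsz t (infixRank t p) ∧
      ∀ k, k ≠ infixRank t p → lsz u k = lsz t k := by
  induction hrot with
  | here a b c =>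
      have hrk : infixRank (node (node a b) c) ([] : List Bool) = a.size + b.size + 1 := by
        simp [infixRank, size]
      rw [hrk]
      constructor
      · rw [lsz_node_gt (by omega : (a.size : ℕ) < a.size + b.size + 1),
          show a.size + b.size + 1 - a.size - 1 = b.size by omega,
          lsz_node_eq,
          show a.size + b.size + 1 = (node a b).size from by simp only [size],
          lsz_node_eq]
        simp only [size]
        omega
      · intro k hk
        rcases lt_trichotomy k a.size with h1 | h1 | h1
        · rw [lsz_node_lt h1, lsz_node_lt (show k < (node a b).size by simp [size]; omega),
            lsz_node_lt h1]
        · subst h1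
          rw [lsz_node_eq, lsz_node_lt (show a.size < (node a b).size by simp [size]),
            lsz_node_eq]
        · rw [lsz_node_gt h1]
          rcases lt_trichotomy (k - a.size - 1) b.size with h2 | h2 | h2
          · rw [lsz_node_lt h2, lsz_node_lt (show k < (node a b).size by simp [size]; omega)]
            rw [lsz_node_gt h1]
          · exact absurd (by omega : k = a.size + b.size + 1) hk
          · rw [lsz_node_gt h2,
              lsz_node_gt (show (node a b).size < k by simp [size]; omega)]
            congr 1
            simp [size]
            omega
  | @left l l' r p h ih =>
      have hrk : infixRank l p < l.size := rank_lt_size h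
      have hsz : l'.size = l.size := rot_size h
      have hrk' : infixRank (node l r) (false :: p) = infixRank l p := rfl
      rw [hrk']
      constructor
      · rw [lsz_node_lt hrk, lsz_node_lt (by omega : infixRank l p < l'.size)]
        exact ih.1
      · intro k hk
        rcases lt_trichotomy k l.size with h1 | h1 | h1
        · rw [lsz_node_lt h1, lsz_node_lt (by omega : k < l'.size)]
          exact ih.2 k hk
        · subst h1
          have e : lsz (node l' r) l.size = l'.size := by rw [← hsz, lsz_node_eq]
          rw [e, lsz_node_eq, hsz]
        · rw [lsz_node_gt h1, lsz_node_gt (by omega : l'.size < k), hsz]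
  | @right l r r' p h ih =>
      have hrk : infixRank r p < r.size := rank_lt_size h
      have hrk' : infixRank (node l r) (true :: p) = l.size + 1 + infixRank r p := rfl
      rw [hrk']
      constructor
      · rw [lsz_node_gt (by omega : l.size < l.size + 1 + infixRank r p),
          lsz_node_gt (by omega : l.size < l.size + 1 + infixRank r p),
          show l.size + 1 + infixRank r p - l.size - 1 = infixRank r p by omega]
        exact ih.1
      · intro k hk
        rcases lt_trichotomy k l.size with h1 | h1 | h1
        · rw [lsz_node_lt h1, lsz_node_lt h1]
        · subst h1; rw [lsz_node_eq, lsz_node_eq]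
        · rw [lsz_node_gt h1, lsz_node_gt h1]
          exact ih.2 _ (by omega)

/-- Effect of a rotation between two balanced trees on the `gk` vector:
the imbalance at the rotation rank goes from `-1` to `≥ 0`, and no imbalance
decreases. -/
lemma gk_rot_balanced {t u : BTree} {p : List Bool} (hrot : RotAt t p u)
    (hbt : Balanced t) (hbu : Balanced u) :
    gk t (infixRank t p) = -1 ∧ 0 ≤ gk u (infixRank t p) ∧
      ∀ k, gk t k ≤ gk u k := by
  induction hrot with
  | here a b c =>
      rw [balanced_node_iff] at hbt hbu
      obtain ⟨hab, hc, ht1, ht2⟩ := hbt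
      obtain ⟨ha', hbc', hu1, hu2⟩ := hbu
      rw [balanced_node_iff] at hab
      obtain ⟨ha, hb, hab1, hab2⟩ := hab
      rw [balanced_node_iff] at hbc'
      obtain ⟨_, _, hbc1, hbc2⟩ := hbc'
      simp only [ht] at ht1 ht2 hu1 hu2 hbc1 hbc2 hab1 hab2
      have hca : ht c = ht a := by omega
      have hba : ht b ≤ ht a := by omega
      have hrk : infixRank (node (node a b) c) ([] : List Bool) = (node a b).size := rfl
      rw [hrk]
      refine ⟨?_, ?_, ?_⟩
      · rw [gk_node_eq]
        simp only [ht]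
        push_cast
        omega
      · rw [show ((node a b).size : ℕ) = a.size + b.size + 1 from rfl,
          gk_node_gt (by omega : (a.size : ℕ) < a.size + b.size + 1),
          show a.size + b.size + 1 - a.size - 1 = b.size by omega, gk_node_eq]
        omega
      · intro k
        rcases lt_trichotomy k a.size with h1 | h1 | h1
        · rw [gk_node_lt (show k < (node a b).size by simp [size]; omega),
            gk_node_lt h1, gk_node_lt h1]
        · subst h1
          rw [gk_node_lt (show a.size < (node a b).size by simp [size]),
            gk_node_eq, gk_node_eq]
          simp only [ht]
          push_cast
          omega
        · rw [gk_node_gt h1]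
          rcases lt_trichotomy (k - a.size - 1) b.size with h2 | h2 | h2
          · rw [gk_node_lt h2,
              gk_node_lt (show k < (node a b).size by simp [size]; omega),
              gk_node_gt h1]
          · rw [h2, gk_node_eq,
              show k = (node a b).size by simp [size]; omega, gk_node_eq]
            simp only [ht]
            push_cast
            omega
          · rw [gk_node_gt h2,
              gk_node_gt (show (node a b).size < k by simp [size]; omega),
              show k - (node a b).size - 1 = k - a.size - 1 - b.size - 1 by
                simp [size]; omega]
  | @left l l' r p h ih =>
      rw [balanced_node_iff] at hbt hbu
      obtain ⟨hl, hr, _, _⟩ := hbt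
      obtain ⟨hl', _, _, _⟩ := hbu
      obtain ⟨i1, i2, i3⟩ := ih hl hl'
      have hrk : infixRank l p < l.size := rank_lt_size h
      have hsz : l'.size = l.size := rot_size h
      have hht : ht l' = ht l := ht_rot_of_balanced h hl hl'
      have hrk' : infixRank (node l r) (false :: p) = infixRank l p := rfl
      rw [hrk']
      refine ⟨?_, ?_, ?_⟩
      · rw [gk_node_lt hrk]; exact i1
      · rw [gk_node_lt (by omega : infixRank l p < l'.size)]; exact i2
      · intro k
        rcases lt_trichotomy k l.size with h1 | h1 | h1
        · rw [gk_node_lt h1, gk_node_lt (by omega : k < l'.size)]; exact i3 k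
        · subst h1
          have e : gk (node l' r) l.size = (r.ht : ℤ) - l'.ht := by
            rw [← hsz, gk_node_eq]
          rw [gk_node_eq, e, hht]
        · rw [gk_node_gt h1, gk_node_gt (by omega : l'.size < k), hsz]
  | @right l r r' p h ih =>
      rw [balanced_node_iff] at hbt hbu
      obtain ⟨hl, hr, _, _⟩ := hbt
      obtain ⟨_, hr', _, _⟩ := hbu
      obtain ⟨i1, i2, i3⟩ := ih hr hr'
      have hht : ht r' = ht r := ht_rot_of_balanced h hr hr'
      have hrk' : infixRank (node l r) (true :: p) = l.size + 1 + infixRank r p := rfl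
      rw [hrk']
      have e3 : l.size + 1 + infixRank r p - l.size - 1 = infixRank r p := by omega
      refine ⟨?_, ?_, ?_⟩
      · rw [gk_node_gt (by omega : l.size < l.size + 1 + infixRank r p), e3]; exact i1
      · rw [gk_node_gt (by omega : l.size < l.size + 1 + infixRank r p), e3]; exact i2
      · intro k
        rcases lt_trichotomy k l.size with h1 | h1 | h1
        · rw [gk_node_lt h1, gk_node_lt h1]
        · subst h1; rw [gk_node_eq, gk_node_eq, hht]
        · rw [gk_node_gt h1, gk_node_gt h1]; exact i3 _

/-! ### Chain lemmas -/

section Chain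

variable {m : ℕ} {U : ℕ → BTree} {p : ℕ → List Bool}

lemma strongB_chain (hU : ∀ i < m, RotAt (U i) (p i) (U (i + 1)))
    {a b : ℕ} (hab : a ≤ b) (hbm : b ≤ m) (hs : StrongB (U a)) : StrongB (U b) := by
  induction b, hab using Nat.le_induction with
  | base => exact hs
  | succ n hn ih => exact strongB_rot (hU n (by omega)) (ih (by omega))

/-- Convexity: every tree in a rotation chain between two balanced trees is
balanced. -/
lemma balanced_chain (hU : ∀ i < m, RotAt (U i) (p i) (U (i + 1)))
    (h0 : Balanced (U 0)) (hm : Balanced (U m)) : ∀ i ≤ m, Balanced (U i) := by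
  intro i him
  induction i with
  | zero => exact h0
  | succ n ih =>
      have hbn : Balanced (U n) := ih (by omega)
      by_contra hcon
      have hs : StrongB (U (n + 1)) :=
        strongB_of_unbal_step (hU n (by omega)) hbn hcon
      exact strongB_not_balanced (strongB_chain hU him le_rfl hs) hm

lemma lsz_chain_mono (hU : ∀ i < m, RotAt (U i) (p i) (U (i + 1)))
    {a b : ℕ} (hab : a ≤ b) (hbm : b ≤ m) (k : ℕ) : lsz (U b) k ≤ lsz (U a) k := by
  induction b, hab using Nat.le_induction with
  | base => exact le_rfl
  | succ n hn ih =>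
      refine le_trans ?_ (ih (by omega))
      have h := lsz_rot (hU n (by omega))
      rcases eq_or_ne k (infixRank (U n) (p n)) with rfl | hne
      · exact le_of_lt h.1
      · exact le_of_eq (h.2 k hne)

lemma gk_chain_mono (hU : ∀ i < m, RotAt (U i) (p i) (U (i + 1)))
    (h0 : Balanced (U 0)) (hm : Balanced (U m))
    {a b : ℕ} (hab : a ≤ b) (hbm : b ≤ m) (k : ℕ) : gk (U a) k ≤ gk (U b) k := by
  induction b, hab using Nat.le_induction with
  | base => exact le_rfl
  | succ n hn ih =>
      refine le_trans (ih (by omega)) ?_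
      have hb1 := balanced_chain hU h0 hm n (by omega)
      have hb2 := balanced_chain hU h0 hm (n + 1) (by omega)
      exact (gk_rot_balanced (hU n (by omega)) hb1 hb2).2.2 k

lemma rank_used_iff (hU : ∀ i < m, RotAt (U i) (p i) (U (i + 1))) (k : ℕ) :
    (∃ i < m, infixRank (U i) (p i) = k) ↔ lsz (U m) k < lsz (U 0) k := by
  constructor
  · rintro ⟨i, him, rfl⟩
    have h1 : lsz (U m) (infixRank (U i) (p i)) ≤ lsz (U (i + 1)) (infixRank (U i) (p i)) :=
      lsz_chain_mono hU (by omega) le_rfl _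
    have h2 : lsz (U (i + 1)) (infixRank (U i) (p i)) < lsz (U i) (infixRank (U i) (p i)) :=
      (lsz_rot (hU i him)).1
    have h3 : lsz (U i) (infixRank (U i) (p i)) ≤ lsz (U 0) (infixRank (U i) (p i)) :=
      lsz_chain_mono hU (by omega) (by omega) _
    omega
  · intro hlt
    by_contra hcon
    push_neg at hcon
    have : ∀ i ≤ m, lsz (U i) k = lsz (U 0) k := by
      intro i him
      induction i with
      | zero => rfl
      | succ n ih =>
          rw [(lsz_rot (hU n (by omega))).2 k (hcon n (by omega)).symm, ih (by omega)]
    have := this m le_rfl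
    omega

lemma rank_nodup (hU : ∀ i < m, RotAt (U i) (p i) (U (i + 1)))
    (h0 : Balanced (U 0)) (hm : Balanced (U m))
    {i j : ℕ} (hij : i < j) (hjm : j < m) :
    infixRank (U i) (p i) ≠ infixRank (U j) (p j) := by
  intro heq
  have hbi := balanced_chain hU h0 hm i (by omega)
  have hbi1 := balanced_chain hU h0 hm (i + 1) (by omega)
  have hbj := balanced_chain hU h0 hm j (by omega)
  have hbj1 := balanced_chain hU h0 hm (j + 1) (by omega)
  have h1 : 0 ≤ gk (U (i + 1)) (infixRank (U i) (p i)) :=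
    (gk_rot_balanced (hU i (by omega)) hbi hbi1).2.1
  have h2 : gk (U (i + 1)) (infixRank (U i) (p i)) ≤ gk (U j) (infixRank (U i) (p i)) :=
    gk_chain_mono hU h0 hm (by omega) (by omega) _
  have h3 : gk (U j) (infixRank (U j) (p j)) = -1 :=
    (gk_rot_balanced (hU j hjm) hbj hbj1).1
  rw [heq] at h1 h2
  omega

end Chain

/-- Between two balanced trees `T0 ≼ T1`, any two chains of right rotations from
`T0` to `T1` have the same length, the rotation roots of a chain occupy pairwise
distinct infix positions, and both chains use the same set of infix positions. -/
theorem rotation_chains_same_roots (T0 T1 : BTree)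
    (h0 : Balanced T0) (h1 : Balanced T1)
    (m m' : ℕ) (U V : ℕ → BTree) (p q : ℕ → List Bool)
    (hU0 : U 0 = T0) (hUm : U m = T1)
    (hV0 : V 0 = T0) (hVm : V m' = T1)
    (hU : ∀ i < m, RotAt (U i) (p i) (U (i + 1)))
    (hV : ∀ i < m', RotAt (V i) (q i) (V (i + 1))) :
    m = m' ∧
    ((List.range m).map fun i => infixRank (U i) (p i)).Nodup ∧
    ((List.range m).map fun i => infixRank (U i) (p i)).toFinset =
      ((List.range m').map fun i => infixRank (V i) (q i)).toFinset := by
  have hU0' : Balanced (U 0) := hU0 ▸ h0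
  have hUm' : Balanced (U m) := hUm ▸ h1
  have hV0' : Balanced (V 0) := hV0 ▸ h0
  have hVm' : Balanced (V m') := hVm ▸ h1
  -- Nodup for both chains
  have hnodupU : ((List.range m).map fun i => infixRank (U i) (p i)).Nodup := by
    refine List.Nodup.map_on ?_ (List.nodup_range)
    intro x hx y hy hxy
    simp only [List.mem_range] at hx hy
    by_contra hne
    rcases lt_or_gt_of_ne hne with h | h
    · exact rank_nodup hU hU0' hUm' h hy hxy
    · exact rank_nodup hU hU0' hUm' h hx hxy.symm
  have hnodupV : ((List.range m').map fun i => infixRank (V i) (q i)).Nodup := by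
    refine List.Nodup.map_on ?_ (List.nodup_range)
    intro x hx y hy hxy
    simp only [List.mem_range] at hx hy
    by_contra hne
    rcases lt_or_gt_of_ne hne with h | h
    · exact rank_nodup hV hV0' hVm' h hy hxy
    · exact rank_nodup hV hV0' hVm' h hx hxy.symm
  -- the two toFinsets agree
  have hsets : ((List.range m).map fun i => infixRank (U i) (p i)).toFinset =
      ((List.range m').map fun i => infixRank (V i) (q i)).toFinset := by
    ext k
    simp only [List.mem_toFinset, List.mem_map, List.mem_range]
    have e1 : (∃ i, i < m ∧ infixRank (U i) (p i) = k) ↔ lsz (U m) k < lsz (U 0) k := by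
      rw [← rank_used_iff hU k]
    have e2 : (∃ i, i < m' ∧ infixRank (V i) (q i) = k) ↔ lsz (V m') k < lsz (V 0) k := by
      rw [← rank_used_iff hV k]
    rw [e1, e2, hU0, hUm, hV0, hVm]
  refine ⟨?_, hnodupU, hsets⟩
  -- lengths agree since both lists are nodup with the same toFinset
  have c1 : ((List.range m).map fun i => infixRank (U i) (p i)).toFinset.card = m := by
    rw [List.toFinset_card_of_nodup hnodupU, List.length_map, List.length_range]
  have c2 : ((List.range m').map fun i => infixRank (V i) (q i)).toFinset.card = m' := by
    rw [List.toFinset_card_of_nodup hnodupV, List.length_map, List.length_range]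
  rw [← c1, ← c2, hsets]

end BTree
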